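/- arXiv:2510.06886 — 2 statements merged into one kernel-verified Lean document; each statement's English description precedes it below -/
import Mathlib

section
/- Let B, X be Wajsberg hoops and let (f, g) be a strong external action of B on X satisfying additionally condition (W2): g_{b₂→b₁}(x → y) → y = g_{b₁→b₂}(y → x) → x for all b₁, b₂ ∈ B and x, y ∈ X. Then the hoop Y' = {(x, b) ∈ X × B | f_b(x) = x}, with operations (x, b) → (y, b') = (g_{b'→b}(x → y), b → b') and (x, b) · (y, b') = (f_{b·b'}(x · y), b · b'), is a Wajsberg hoop, i.e. ((u → v) → v) = ((v → u) → u) for all u, v ∈ Y'. -/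
class Hoop (α : Type*) extends CommMonoid α, HImp α where
  himp_self : ∀ x : α, x ⇨ x = 1
  mul_himp_comm : ∀ x y : α, x * (x ⇨ y) = y * (y ⇨ x)
  mul_himp_assoc : ∀ x y z : α, (x * y) ⇨ z = x ⇨ (y ⇨ z)

section HoopLemmas
variable {α : Type*} [Hoop α]

lemma one_himp_himp' (y z : α) : (1 : α) ⇨ (y ⇨ z) = y ⇨ z := by
  rw [← Hoop.mul_himp_assoc, one_mul]

lemma mul_himp_one' (x : α) : x * (x ⇨ 1) = 1 ⇨ x := by
  have h := Hoop.mul_himp_comm x 1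
  rwa [one_mul] at h

lemma P1' (x : α) : ((1 : α) ⇨ x) ⇨ 1 = 1 := by
  rw [← mul_himp_one', mul_comm, Hoop.mul_himp_assoc, Hoop.himp_self]

lemma t1' (x : α) : ((x ⇨ (1 : α)) ⇨ 1) = 1 := by
  have h := P1' (x ⇨ (1 : α))
  rwa [one_himp_himp'] at h

lemma L13' (x y : α) : x ⇨ ((x ⇨ y) ⇨ y) = (y ⇨ x) ⇨ 1 := by
  calc x ⇨ ((x ⇨ y) ⇨ y) = (x * (x ⇨ y)) ⇨ y := (Hoop.mul_himp_assoc ..).symm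
    _ = (y * (y ⇨ x)) ⇨ y := by rw [Hoop.mul_himp_comm]
    _ = ((y ⇨ x) * y) ⇨ y := by rw [mul_comm]
    _ = (y ⇨ x) ⇨ (y ⇨ y) := Hoop.mul_himp_assoc ..
    _ = (y ⇨ x) ⇨ 1 := by rw [Hoop.himp_self]

lemma star' (x : α) : ((1 : α) ⇨ x) ⇨ x = 1 := by
  have h := L13' (1 : α) x
  rw [one_himp_himp'] at h
  rw [h, t1']

lemma one_himp' (x : α) : (1 : α) ⇨ x = x := by
  have h := Hoop.mul_himp_comm ((1 : α) ⇨ x) x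
  have h2 : x ⇨ ((1 : α) ⇨ x) = 1 := by
    rw [← Hoop.mul_himp_assoc, mul_one, Hoop.himp_self]
  rw [star', h2, mul_one, mul_one] at h
  exact h

lemma himp_one' (x : α) : x ⇨ (1 : α) = 1 := by
  have hx : x * (x ⇨ 1) = x := by rw [mul_himp_one', one_himp']
  calc x ⇨ (1 : α) = (x * (x ⇨ 1)) ⇨ 1 := by rw [hx]
    _ = ((x ⇨ 1) * x) ⇨ 1 := by rw [mul_comm]
    _ = (x ⇨ 1) ⇨ (x ⇨ 1) := Hoop.mul_himp_assoc ..
    _ = 1 := Hoop.himp_self _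

lemma himp_himp_self' (b c : α) : c ⇨ (b ⇨ c) = 1 := by
  rw [← Hoop.mul_himp_assoc, mul_comm, Hoop.mul_himp_assoc, Hoop.himp_self, himp_one']

end HoopLemmas

/-- A Wajsberg hoop: a hoop satisfying `(x → y) → y = (y → x) → x`. -/
class WajsbergHoop (α : Type*) extends Hoop α where
  waj : ∀ x y : α, (x ⇨ y) ⇨ y = (y ⇨ x) ⇨ x

/-- The multiplication of the semidirect product of a strong external action. -/
def Amul {B X : Type*} [Hoop B] [Hoop X] (f : B → X → X) (q r : X × B) : X × B :=
  (f (q.2 * r.2) (q.1 * r.1), q.2 * r.2)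

/-- The implication of the semidirect product of a strong external action. -/
def Aimp {B X : Type*} [Hoop B] [Hoop X] (g : B → X → X) (q r : X × B) : X × B :=
  (g (r.2 ⇨ q.2) (q.1 ⇨ r.1), q.2 ⇨ r.2)

/-- Membership in `Y' = {(x,b) ∈ X × B | f_b(x) = x}`. -/
def memY {B X : Type*} [Hoop B] [Hoop X] (f : B → X → X) (q : X × B) : Prop :=
  f q.2 q.1 = q.1

/-- For a strong external action `(f,g)` of a Wajsberg hoop `B` on a Wajsberg hoop `X`
satisfying additionally condition (W2), the semidirect product hoop
`Y' = {(x,b) | f_b(x) = x}` is a Wajsberg hoop: `(u → v) → v = (v → u) → u`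
for all `u, v ∈ Y'`. -/
theorem stmt12 {B X : Type*} [WajsbergHoop B] [WajsbergHoop X] (f g : B → X → X)
    (E1f : ∀ b : B, f b 1 = 1) (E1g : ∀ b : B, g b 1 = 1)
    (E2f : ∀ x : X, f 1 x = x) (E2g : ∀ x : X, g 1 x = x)
    (E3 : ∀ (b₁ b₂ : B) (x y : X),
      f (b₁ * b₂) (x * g b₁ (x ⇨ y)) = f (b₁ * b₂) (x * (x ⇨ y)))
    (E4 : ∀ (b₁ b₂ b₃ : B) (x y z : X),
      g (b₃ ⇨ (b₁ * b₂)) (f (b₁ * b₂) (x * y) ⇨ z)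
        = g ((b₂ ⇨ b₃) ⇨ b₁) (x ⇨ g (b₃ ⇨ b₂) (y ⇨ z)))
    (W2 : ∀ (b₁ b₂ : B) (x y : X),
      g (b₂ ⇨ b₁) (x ⇨ y) ⇨ y = g (b₁ ⇨ b₂) (y ⇨ x) ⇨ x) :
    ∀ u v : X × B, memY f u → memY f v →
      Aimp g (Aimp g u v) v = Aimp g (Aimp g v u) u := by
  intro u v _ _
  obtain ⟨x, b⟩ := u
  obtain ⟨y, c⟩ := v
  simp only [Aimp]
  refine Prod.ext ?_ ?_
  · show g (c ⇨ (b ⇨ c)) (g (c ⇨ b) (x ⇨ y) ⇨ y)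
        = g (b ⇨ (c ⇨ b)) (g (b ⇨ c) (y ⇨ x) ⇨ x)
    rw [himp_himp_self', himp_himp_self', E2g, E2g]
    exact W2 b c x y
  · exact WajsbergHoop.waj b c
end

section
/- Let A, B be Wajsberg hoops and p : A → B, s : B → A homomorphisms with p ∘ s = id_B and with s a strong section, and let X = {a ∈ A | p(a) = 1}. Then for all b₁, b₂ ∈ B and x, y ∈ X: (s(b₂ → b₁) → (x → y)) → y = (s(b₁ → b₂) → (y → x)) → x; that is, the induced strong external action g_b(x) = s(b) → x satisfies condition (W2). -/
section HoopLemmas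

variable {α : Type*} [Hoop α]

lemma hoop_h1 (x : α) : (1:α) ⇨ x = x * (x ⇨ 1) := by
  have h := Hoop.mul_himp_comm (1:α) x
  simpa using h

lemma hoop_h2 (x : α) : x ⇨ ((1:α) ⇨ x) = 1 := by
  have h := Hoop.mul_himp_assoc x (1:α) x
  rw [mul_one, Hoop.himp_self] at h
  exact h.symm

lemma hoop_one_himp_himp_one (x : α) : (1:α) ⇨ (x ⇨ 1) = x ⇨ 1 := by
  have h := Hoop.mul_himp_assoc (1:α) x 1
  rw [one_mul] at h
  exact h.symm

lemma hoop_h6 (x : α) : (x ⇨ (1:α)) * ((x ⇨ (1:α)) ⇨ 1) = x ⇨ 1 := by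
  have h := Hoop.mul_himp_comm (x ⇨ (1:α)) 1
  rw [one_mul, hoop_one_himp_himp_one] at h
  exact h

lemma hoop_h4 (x : α) : ((1:α) ⇨ x) ⇨ x = (x ⇨ (1:α)) ⇨ 1 := by
  rw [hoop_h1, mul_comm, Hoop.mul_himp_assoc, Hoop.himp_self]

lemma hoop_one_himp (x : α) : (1:α) ⇨ x = x := by
  have h3 := Hoop.mul_himp_comm ((1:α) ⇨ x) x
  rw [hoop_h2, mul_one, hoop_h4, hoop_h1, mul_assoc, hoop_h6] at h3
  rw [hoop_h1, h3]

lemma hoop_himp_himp_one (a b : α) : (a ⇨ b) ⇨ (1:α) = 1 := by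
  have e1 : (a ⇨ b) ⇨ (1:α) = ((a ⇨ b) * a) ⇨ a := by
    rw [Hoop.mul_himp_assoc, Hoop.himp_self]
  rw [e1, mul_comm, Hoop.mul_himp_comm, mul_comm, Hoop.mul_himp_assoc,
    Hoop.himp_self]

lemma hoop_himp_one (x : α) : x ⇨ (1:α) = 1 := by
  have h := hoop_himp_himp_one (1:α) x
  rwa [hoop_one_himp] at h

lemma hoop_himp_himp_comm (a b c : α) : a ⇨ (b ⇨ c) = b ⇨ (a ⇨ c) := by
  rw [← Hoop.mul_himp_assoc, mul_comm, Hoop.mul_himp_assoc]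

end HoopLemmas

/-- For a split epimorphism of Wajsberg hoops `p : A → B` with strong section `s` and
kernel `X = {a | p a = 1}`, the induced action `g_b(x) = s b → x` satisfies (W2):
`(s(b₂ → b₁) → (x → y)) → y = (s(b₁ → b₂) → (y → x)) → x` for `x, y ∈ X`. -/
theorem stmt13 {A B : Type*} [WajsbergHoop A] [WajsbergHoop B] (p : A → B) (s : B → A)
    (hp1 : p 1 = 1) (hpm : ∀ a a' : A, p (a * a') = p a * p a')
    (hpi : ∀ a a' : A, p (a ⇨ a') = p a ⇨ p a')
    (hs1 : s 1 = 1) (hsm : ∀ b b' : B, s (b * b') = s b * s b')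
    (hsi : ∀ b b' : B, s (b ⇨ b') = s b ⇨ s b')
    (hps : ∀ b : B, p (s b) = b)
    (hss : ∀ (a : A) (b : B), a ⇨ s b = s (p a) ⇨ s b) :
    ∀ (b₁ b₂ : B) (x y : A), p x = 1 → p y = 1 →
      (s (b₂ ⇨ b₁) ⇨ (x ⇨ y)) ⇨ y = (s (b₁ ⇨ b₂) ⇨ (y ⇨ x)) ⇨ x := by
  -- Key lemma: for any `b : B` and `z` in the kernel, `s b ⇨ z = z`.
  have key : ∀ (b : B) (z : A), p z = 1 → s b ⇨ z = z := by
    intro b z hz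
    have hzc : z ⇨ s b = s b := by
      rw [hss z b, hz, hs1, hoop_one_himp]
    have h1 : (s b ⇨ z) ⇨ z = 1 := by
      rw [WajsbergHoop.waj, hzc, Hoop.himp_self]
    have h2 : z ⇨ (s b ⇨ z) = 1 := by
      rw [hoop_himp_himp_comm, Hoop.himp_self, hoop_himp_one]
    calc s b ⇨ z = (s b ⇨ z) * ((s b ⇨ z) ⇨ z) := by rw [h1, mul_one]
      _ = z * (z ⇨ (s b ⇨ z)) := Hoop.mul_himp_comm _ _
      _ = z := by rw [h2, mul_one]
  intro b₁ b₂ x y hx hy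
  have hxy : p (x ⇨ y) = 1 := by
    rw [hpi, hx, hy, Hoop.himp_self]
  have hyx : p (y ⇨ x) = 1 := by
    rw [hpi, hx, hy, Hoop.himp_self]
  rw [key _ _ hxy, key _ _ hyx]
  exact WajsbergHoop.waj x y
end
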